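/- Let m₁, m₂ be real inner product spaces of dimension ≥ 2, and identify m = m₁ ⊗ m₂ with linear maps L(m₁,m₂). The 4-form Ω := β(R), where R(u,v,w,z) := tr((uv* - vu*)(wz* - zw*)) and β is the Bianchi sum, is a nonzero so(m₁) ⊕ so(m₂)-invariant element of Λ⁴(m₁ ⊗ m₂). -/

import Mathlib

open scoped RealInnerProductSpace

variable {E F : Type*}
  [NormedAddCommGroup E] [InnerProductSpace ℝ E] [FiniteDimensional ℝ E]
  [NormedAddCommGroup F] [InnerProductSpace ℝ F] [FiniteDimensional ℝ F]

/-- `R(u,v,w,z) = tr((uv* - vu*)(wz* - zw*))` on `L(m₁,m₂)`. -/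
noncomputable def Rquad (u v w z : E →ₗ[ℝ] F) : ℝ :=
  LinearMap.trace ℝ F
    ((u ∘ₗ LinearMap.adjoint v - v ∘ₗ LinearMap.adjoint u) ∘ₗ
      (w ∘ₗ LinearMap.adjoint z - z ∘ₗ LinearMap.adjoint w))

/-- `Ω = β(R)`, the Bianchi sum of `R`. -/
noncomputable def OmegaR (u v w z : E →ₗ[ℝ] F) : ℝ :=
  Rquad u v w z + Rquad v w u z + Rquad w u v z

/-- The rank one map `x ⊗ y : m₁ → m₂`, `e ↦ ⟨x,e⟩ y`. -/
noncomputable def tmap (x : E) (y : F) : E →ₗ[ℝ] F :=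
  (innerSL ℝ x).toLinearMap.smulRight y

noncomputable def Tq (u v w z : E →ₗ[ℝ] F) : ℝ :=
  LinearMap.trace ℝ F ((u ∘ₗ LinearMap.adjoint v) ∘ₗ (w ∘ₗ LinearMap.adjoint z))

lemma Rquad_eq (u v w z : E →ₗ[ℝ] F) :
    Rquad u v w z = Tq u v w z - Tq u v z w - Tq v u w z + Tq v u z w := by
  simp only [Rquad, Tq, LinearMap.sub_comp, LinearMap.comp_sub, map_sub]
  ring

lemma skew_adj {A : E →ₗ[ℝ] E} (hA : ∀ x y : E, ⟪A x, y⟫ + ⟪x, A y⟫ = 0) :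
    LinearMap.adjoint A = -A := by
  symm
  rw [LinearMap.eq_adjoint_iff]
  intro x y
  have := hA x y
  simp only [LinearMap.neg_apply, inner_neg_left]
  linarith

lemma TqA1 {A : E →ₗ[ℝ] E} (hA : LinearMap.adjoint A = -A) (u v w z : E →ₗ[ℝ] F) :
    Tq (u ∘ₗ A) v w z + Tq u (v ∘ₗ A) w z = 0 := by
  simp [Tq, LinearMap.adjoint_comp, hA, LinearMap.comp_assoc, LinearMap.neg_comp,
    LinearMap.comp_neg]

lemma TqA2 {A : E →ₗ[ℝ] E} (hA : LinearMap.adjoint A = -A) (u v w z : E →ₗ[ℝ] F) :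
    Tq u v (w ∘ₗ A) z + Tq u v w (z ∘ₗ A) = 0 := by
  simp [Tq, LinearMap.adjoint_comp, hA, LinearMap.comp_assoc, LinearMap.neg_comp,
    LinearMap.comp_neg]

lemma RqA {A : E →ₗ[ℝ] E} (hA : LinearMap.adjoint A = -A) (u v w z : E →ₗ[ℝ] F) :
    Rquad (u ∘ₗ A) v w z + Rquad u (v ∘ₗ A) w z + Rquad u v (w ∘ₗ A) z
      + Rquad u v w (z ∘ₗ A) = 0 := by
  simp only [Rquad_eq]
  have h1 := TqA1 hA u v w z
  have h2 := TqA1 hA u v z w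
  have h3 := TqA1 hA v u w z
  have h4 := TqA1 hA v u z w
  have h5 := TqA2 hA u v w z
  have h6 := TqA2 hA u v z w
  have h7 := TqA2 hA v u w z
  have h8 := TqA2 hA v u z w
  linarith

lemma TqB {B : F →ₗ[ℝ] F} (hB : LinearMap.adjoint B = -B) (u v w z : E →ₗ[ℝ] F) :
    Tq (B ∘ₗ u) v w z + Tq u (B ∘ₗ v) w z + Tq u v (B ∘ₗ w) z + Tq u v w (B ∘ₗ z) = 0 := by
  simp only [Tq, LinearMap.adjoint_comp, hB, LinearMap.comp_neg, LinearMap.neg_comp,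
    map_neg, LinearMap.comp_assoc]
  rw [LinearMap.trace_comp_comm' (u ∘ₗ LinearMap.adjoint v ∘ₗ w ∘ₗ LinearMap.adjoint z) B]
  simp only [LinearMap.comp_assoc]
  ring

lemma RqB {B : F →ₗ[ℝ] F} (hB : LinearMap.adjoint B = -B) (u v w z : E →ₗ[ℝ] F) :
    Rquad (B ∘ₗ u) v w z + Rquad u (B ∘ₗ v) w z + Rquad u v (B ∘ₗ w) z
      + Rquad u v w (B ∘ₗ z) = 0 := by
  simp only [Rquad_eq]
  have h1 := TqB hB u v w z
  have h2 := TqB hB u v z w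
  have h3 := TqB hB v u w z
  have h4 := TqB hB v u z w
  linarith

lemma adjoint_tmap (x : E) (y : F) : LinearMap.adjoint (tmap x y) = tmap y x := by
  symm
  rw [LinearMap.eq_adjoint_iff]
  intro f e
  simp [tmap, inner_smul_left, inner_smul_right, real_inner_comm]
  ring

lemma tmap_comp {X : Type*} [NormedAddCommGroup X] [InnerProductSpace ℝ X]
    (a : E) (b : F) (c : X) (d : E) :
    tmap a b ∘ₗ tmap c d = ⟪a, d⟫ • tmap c b := by
  ext f
  simp [tmap, inner_smul_right, smul_smul, mul_comm]

lemma trace_tmap (a b : E) : LinearMap.trace ℝ E (tmap a b) = ⟪a, b⟫ := by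
  have h : tmap a b = dualTensorHom ℝ E E ((innerSL ℝ a).toLinearMap ⊗ₜ[ℝ] b) := by
    ext e; simp [tmap, dualTensorHom_apply]
  rw [h, LinearMap.trace_eq_contract_apply, contractLeft_apply]
  rfl

lemma OmegaR_tmap (x : Fin 2 → E) (hx : Orthonormal ℝ x) (y : Fin 2 → F)
    (hy : Orthonormal ℝ y) :
    OmegaR (tmap (x 0) (y 0)) (tmap (x 0) (y 1))
      (tmap (x 1) (y 0)) (tmap (x 1) (y 1)) = -2 := by
  have hx' := orthonormal_iff_ite.mp hx
  have hy' := orthonormal_iff_ite.mp hy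
  have e00 : ⟪x 0, x 0⟫ = (1:ℝ) := by simpa using hx' 0 0
  have e01 : ⟪x 0, x 1⟫ = (0:ℝ) := by simpa using hx' 0 1
  have e10 : ⟪x 1, x 0⟫ = (0:ℝ) := by simpa using hx' 1 0
  have e11 : ⟪x 1, x 1⟫ = (1:ℝ) := by simpa using hx' 1 1
  have f00 : ⟪y 0, y 0⟫ = (1:ℝ) := by simpa using hy' 0 0
  have f01 : ⟪y 0, y 1⟫ = (0:ℝ) := by simpa using hy' 0 1
  have f10 : ⟪y 1, y 0⟫ = (0:ℝ) := by simpa using hy' 1 0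
  have f11 : ⟪y 1, y 1⟫ = (1:ℝ) := by simpa using hy' 1 1
  simp only [OmegaR, Rquad, adjoint_tmap, tmap_comp, e00, e01, e10, e11,
    one_smul, zero_smul, sub_zero, zero_sub, LinearMap.sub_comp, LinearMap.comp_sub,
    LinearMap.smul_comp, LinearMap.comp_smul, LinearMap.zero_comp, LinearMap.comp_zero,
    map_sub, map_add, map_smul, map_neg, map_zero, trace_tmap, f00, f01, f10, f11,
    smul_eq_mul, neg_sub, sub_self]
  norm_num

theorem OmegaR_invariant_nonzero
    (hE : 2 ≤ Module.finrank ℝ E) (hF : 2 ≤ Module.finrank ℝ F) :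
    (∀ A : E →ₗ[ℝ] E, (∀ x y : E, ⟪A x, y⟫ + ⟪x, A y⟫ = 0) →
      ∀ u v w z : E →ₗ[ℝ] F,
        OmegaR (u ∘ₗ A) v w z + OmegaR u (v ∘ₗ A) w z
          + OmegaR u v (w ∘ₗ A) z + OmegaR u v w (z ∘ₗ A) = 0) ∧
    (∀ B : F →ₗ[ℝ] F, (∀ x y : F, ⟪B x, y⟫ + ⟪x, B y⟫ = 0) →
      ∀ u v w z : E →ₗ[ℝ] F,
        OmegaR (B ∘ₗ u) v w z + OmegaR u (B ∘ₗ v) w z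
          + OmegaR u v (B ∘ₗ w) z + OmegaR u v w (B ∘ₗ z) = 0) ∧
    (∀ x : Fin 2 → E, Orthonormal ℝ x → ∀ y : Fin 2 → F, Orthonormal ℝ y →
      OmegaR (tmap (x 0) (y 0)) (tmap (x 0) (y 1))
        (tmap (x 1) (y 0)) (tmap (x 1) (y 1)) ≠ 0) ∧
    (∃ u v w z : E →ₗ[ℝ] F, OmegaR u v w z ≠ 0) := by
  refine ⟨?_, ?_, ?_, ?_⟩
  · intro A hA u v w z
    have hA' := skew_adj hA
    simp only [OmegaR]
    have h1 := RqA hA' u v w z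
    have h2 := RqA hA' v w u z
    have h3 := RqA hA' w u v z
    linarith
  · intro B hB u v w z
    have hB' := skew_adj hB
    simp only [OmegaR]
    have h1 := RqB hB' u v w z
    have h2 := RqB hB' v w u z
    have h3 := RqB hB' w u v z
    linarith
  · intro x hx y hy
    rw [OmegaR_tmap x hx y hy]; norm_num
  · set bE := stdOrthonormalBasis ℝ E with hbE
    set bF := stdOrthonormalBasis ℝ F with hbF
    have hx : Orthonormal ℝ (fun i : Fin 2 => bE (Fin.castLE hE i)) :=
      bE.orthonormal.comp _ (Fin.castLE_injective hE)
    have hy : Orthonormal ℝ (fun i : Fin 2 => bF (Fin.castLE hF i)) :=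
      bF.orthonormal.comp _ (Fin.castLE_injective hF)
    refine ⟨tmap (bE (Fin.castLE hE 0)) (bF (Fin.castLE hF 0)),
      tmap (bE (Fin.castLE hE 0)) (bF (Fin.castLE hF 1)),
      tmap (bE (Fin.castLE hE 1)) (bF (Fin.castLE hF 0)),
      tmap (bE (Fin.castLE hE 1)) (bF (Fin.castLE hF 1)), ?_⟩
    have h := OmegaR_tmap _ hx _ hy
    rw [h]
    norm_num
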